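/- Let X be a stationary time series with autocovariance γ satisfying Σ_{k∈ℤ}|γ_k| < ∞, let Z_i = X̃_i + ξ_i be the privatized data with truncation level τ_n and i.i.d. Laplace(2τ_n/α) noise, let f̂_m be the projection estimator on a model S_m of dimension D_m, and let f_m be the L²-projection of the spectral density f onto S_m. Then E‖f̂_m − f_m‖⁴ ≤ C D_m² [ (Σ_{k∈ℤ}|γ_k| + 8τ_n²/α²)⁴ + n⁴τ_n⁸/(1 ∧ α⁸) ] for a numerical constant C > 0. -/

import Mathlib

open MeasureTheory ProbabilityTheory Real

noncomputable def sampleMean (n : ℕ) (x : Fin n → ℝ) : ℝ := (∑ t, x t) / n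

/-- The centred periodogram `I_n(ω) = (1/(2πn)) |∑_{t=1}^n (x_t - x̄_n) e^{-itω}|²`. -/
noncomputable def periodogram (n : ℕ) (x : Fin n → ℝ) (ω : ℝ) : ℝ :=
  (1 / (2 * π * n)) *
    ‖∑ t : Fin n, ((x t - sampleMean n x : ℝ) : ℂ) *
      Complex.exp (-(Complex.I * ((t.1 + 1 : ℕ) : ℂ) * (ω : ℂ)))‖ ^ 2

/-- `ξ` is a centred Laplace random variable with scale parameter `b`. -/
def IsLaplace {Ω : Type*} [MeasurableSpace Ω] (P : Measure Ω) (ξ : Ω → ℝ) (b : ℝ) : Prop :=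
  Measure.map ξ P =
    volume.withDensity fun x => ENNReal.ofReal ((1 / (2 * b)) * Real.exp (-|x| / b))

open MeasureTheory Real Set

lemma aux_integrable_comp_abs {g : ℝ → ℝ} (hg : IntegrableOn g (Set.Ioi 0)) :
    Integrable (fun x => g |x|) := by
  have hIoi : IntegrableOn (fun x => g |x|) (Set.Ioi 0) := by
    apply hg.congr_fun ?_ measurableSet_Ioi
    intro x hx
    show g x = g |x|
    rw [abs_of_pos hx]
  have hIic : IntegrableOn (fun x => g |x|) (Set.Iic 0) := by
    rw [← Measure.map_neg_eq_self (volume : Measure ℝ)]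
    have m : MeasurableEmbedding fun x : ℝ => -x := (Homeomorph.neg ℝ).measurableEmbedding
    rw [m.integrableOn_map_iff]
    simp_rw [Function.comp_def, abs_neg, neg_preimage, neg_Iic, neg_zero]
    exact Iff.mpr integrableOn_Ici_iff_integrableOn_Ioi hIoi
  have := hIic.union hIoi
  rwa [Set.Iic_union_Ioi, integrableOn_univ] at this

lemma laplace_density_moment8 {b : ℝ} (hb : 0 < b) :
    Integrable (fun x : ℝ => (1/(2*b)) * Real.exp (-|x|/b) * x^8) volume ∧
    (∫ x : ℝ, (1/(2*b)) * Real.exp (-|x|/b) * x^8) = 40320 * b^8 := by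
  set g : ℝ → ℝ := fun t => (1/(2*b)) * Real.exp (-t/b) * t^8 with hgdef
  have hcomp : (fun x : ℝ => (1/(2*b)) * Real.exp (-|x|/b) * x^8) = fun x => g |x| := by
    funext x
    simp only [hgdef]
    rw [pow_abs, abs_of_nonneg (by positivity : (0:ℝ) ≤ x^8)]
  have hIoi : IntegrableOn g (Set.Ioi 0) := by
    have h := integrableOn_rpow_mul_exp_neg_mul_rpow (s := 8) (p := 1) (b := 1/b)
      (by norm_num) (by norm_num) (by positivity)
    have h2 : IntegrableOn (fun x : ℝ => (1/(2*b)) * (x ^ (8:ℝ) * Real.exp (-(1/b) * x ^ (1:ℝ))))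
        (Set.Ioi 0) := h.const_mul _
    apply h2.congr_fun ?_ measurableSet_Ioi
    intro x hx
    simp only [hgdef]
    rw [Real.rpow_one, show (8:ℝ) = ((8:ℕ):ℝ) by norm_num, Real.rpow_natCast]
    rw [show -(1/b) * x = -x/b by ring]
    ring
  constructor
  · rw [hcomp]
    exact aux_integrable_comp_abs hIoi
  · rw [hcomp, integral_comp_abs (f := g)]
    have h9 : ∫ x in Set.Ioi (0:ℝ), g x
        = (1/(2*b)) * ((1/(1/b)) ^ (9:ℝ) * Real.Gamma 9) := by
      rw [← integral_rpow_mul_exp_neg_mul_Ioi (by norm_num : (0:ℝ) < 9) (by positivity : (0:ℝ) < 1/b),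
        ← integral_const_mul]
      apply setIntegral_congr_fun measurableSet_Ioi
      intro x hx
      simp only [hgdef]
      rw [show (9:ℝ) - 1 = ((8:ℕ):ℝ) by norm_num, Real.rpow_natCast]
      rw [show -(1/b * x) = -x/b by ring]
      ring
    rw [h9, one_div_one_div]
    rw [show (9:ℝ) = ((8:ℕ):ℝ) + 1 by norm_num, Real.Gamma_nat_eq_factorial]
    rw [show ((8:ℕ):ℝ) + 1 = ((9:ℕ):ℝ) by norm_num, Real.rpow_natCast]
    have hf8 : (Nat.factorial 8 : ℝ) = 40320 := by norm_num [Nat.factorial]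
    rw [hf8]
    field_simp

lemma laplace_moment8 {Ω : Type} [MeasurableSpace Ω] {P : Measure Ω} {ξ : Ω → ℝ}
    (hξ : Measurable ξ) {b : ℝ} (hb : 0 < b) (hL : IsLaplace P ξ b) :
    Integrable (fun x => (ξ x)^8) P ∧ ∫ x, (ξ x)^8 ∂P = 40320 * b^8 := by
  set dens : ℝ → ℝ := fun x => (1/(2*b)) * Real.exp (-|x|/b) with hdens
  have hdnn : ∀ x, 0 ≤ dens x := fun x => by positivity
  have hdm : Measurable fun x : ℝ => (dens x).toNNReal := by
    apply Measurable.real_toNNReal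
    fun_prop
  have hwd : (volume.withDensity fun x => ENNReal.ofReal (dens x))
      = volume.withDensity (fun x => ((dens x).toNNReal : ENNReal)) := rfl
  have hsmul_eq : (fun x : ℝ => (dens x).toNNReal • (x^8)) = fun x : ℝ => dens x * x^8 :=
    funext fun x => by rw [NNReal.smul_def, Real.coe_toNNReal _ (hdnn x), smul_eq_mul]
  have hint2 : Integrable (fun y : ℝ => y^8)
      (volume.withDensity fun x => ENNReal.ofReal (dens x)) := by
    have hint1 : Integrable (fun x : ℝ => (dens x).toNNReal • (x^8 : ℝ)) volume := by
      rw [hsmul_eq]; exact (laplace_density_moment8 hb).1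
    rw [hwd]
    exact (integrable_withDensity_iff_integrable_smul hdm).mpr hint1
  unfold IsLaplace at hL
  have hmeas8 : Measurable fun y : ℝ => y^8 := by fun_prop
  constructor
  · have h := hint2
    rw [← hL] at h
    exact (integrable_map_measure hmeas8.aestronglyMeasurable hξ.aemeasurable).mp h
  · calc ∫ x, (ξ x)^8 ∂P = ∫ y, y^8 ∂(Measure.map ξ P) :=
          (integral_map hξ.aemeasurable hmeas8.aestronglyMeasurable).symm
    _ = ∫ y, y^8 ∂(volume.withDensity fun x => ENNReal.ofReal (dens x)) := by rw [hL]
    _ = ∫ y, (dens y).toNNReal • y^8 := by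
          rw [hwd, integral_withDensity_eq_integral_smul hdm]
    _ = 40320 * b^8 := by rw [hsmul_eq]; exact (laplace_density_moment8 hb).2


lemma aux_pow8_add (u v : ℝ) : (u + v)^8 ≤ 128 * (u^8 + v^8) := by
  have h2 : (u + v)^2 ≤ 2*(u^2+v^2) := by nlinarith [sq_nonneg (u-v)]
  have h4 : (u^2+v^2)^2 ≤ 2*(u^4+v^4) := by nlinarith [sq_nonneg (u^2-v^2)]
  have h8 : (u^4+v^4)^2 ≤ 2*(u^8+v^8) := by nlinarith [sq_nonneg (u^4-v^4)]
  calc (u+v)^8 = ((u+v)^2)^4 := by ring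
  _ ≤ (2*(u^2+v^2))^4 := pow_le_pow_left₀ (sq_nonneg _) h2 4
  _ = 16 * ((u^2+v^2)^2)^2 := by ring
  _ ≤ 16 * (2*(u^4+v^4))^2 := by
      have := pow_le_pow_left₀ (by positivity) h4 2
      nlinarith [this]
  _ = 64 * (u^4+v^4)^2 := by ring
  _ ≤ 64 * (2*(u^8+v^8)) := by nlinarith [h8]
  _ = 128 * (u^8+v^8) := by ring

lemma aux_add3_pow4 (a b c : ℝ) (ha : 0 ≤ a) (hb : 0 ≤ b) (hc : 0 ≤ c) :
    (a+b+c)^4 ≤ 27*(a^4+b^4+c^4) := by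
  have h1 : (a+b+c)^2 ≤ 3*(a^2+b^2+c^2) := by
    nlinarith [sq_nonneg (a-b), sq_nonneg (b-c), sq_nonneg (a-c)]
  have h2 : (a^2+b^2+c^2)^2 ≤ 3*(a^4+b^4+c^4) := by
    nlinarith [sq_nonneg (a^2-b^2), sq_nonneg (b^2-c^2), sq_nonneg (a^2-c^2)]
  calc (a+b+c)^4 = ((a+b+c)^2)^2 := by ring
  _ ≤ (3*(a^2+b^2+c^2))^2 := pow_le_pow_left₀ (by positivity) h1 2
  _ = 9 * (a^2+b^2+c^2)^2 := by ring
  _ ≤ 9 * (3*(a^4+b^4+c^4)) := by nlinarith [h2]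
  _ = 27*(a^4+b^4+c^4) := by ring



lemma aux_cs {μ : Measure ℝ} [IsFiniteMeasure μ] {φ : ℝ → ℝ}
    (h1 : Integrable (fun w => |φ w|) μ) (h2 : Integrable (fun w => φ w * φ w) μ) :
    (∫ w, |φ w| ∂μ)^2 ≤ (μ Set.univ).toReal * ∫ w, φ w * φ w ∂μ := by
  set T := (μ Set.univ).toReal with hT
  have hT0 : 0 ≤ T := ENNReal.toReal_nonneg
  set t := ∫ w, |φ w| ∂μ with ht
  rcases eq_or_lt_of_le hT0 with h0 | hTpos
  · have hμ0 : μ = 0 := by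
      have : μ Set.univ = 0 := by
        have hfin : μ Set.univ ≠ ⊤ := (measure_lt_top μ _).ne
        rw [hT] at h0
        exact (ENNReal.toReal_eq_zero_iff _).mp h0.symm |>.resolve_right hfin
      exact Measure.measure_univ_eq_zero.mp this
    subst hμ0
    simp [ht]
  · have key : 0 ≤ ∫ w, (T * |φ w| - t)^2 ∂μ := integral_nonneg fun w => sq_nonneg _
    have hid : (fun w => (T * |φ w| - t)^2)
        = fun w => T^2 * (φ w * φ w) - (2*T*t) * |φ w| + t^2 := by
      funext w
      have h := abs_mul_abs_self (φ w)
      nlinarith [h]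
    rw [hid] at key
    have hi1 : Integrable (fun w => T^2 * (φ w * φ w) - (2*T*t) * |φ w|) μ :=
      Integrable.sub (h2.const_mul _) (h1.const_mul _)
    rw [integral_add hi1 (integrable_const _),
      integral_sub (h2.const_mul _) (h1.const_mul _), integral_const_mul, integral_const_mul,
      integral_const] at key
    simp only [smul_eq_mul, measureReal_def, ← hT, ← ht] at key
    nlinarith [key, hTpos]

lemma periodogram_nonneg (n : ℕ) (x : Fin n → ℝ) (w : ℝ) : 0 ≤ periodogram n x w := by
  unfold periodogram
  positivity

lemma periodogram_continuous (n : ℕ) (x : Fin n → ℝ) : Continuous (periodogram n x) := by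
  unfold periodogram
  apply Continuous.mul continuous_const
  apply Continuous.pow
  apply continuous_norm.comp
  apply continuous_finset_sum
  intro t _
  exact continuous_const.mul (Complex.continuous_exp.comp
    ((continuous_const.mul Complex.continuous_ofReal).neg))

lemma periodogram_le (n : ℕ) (hn : 1 ≤ n) (x : Fin n → ℝ) (w : ℝ) :
    periodogram n x w ≤ ∑ t, (x t)^2 := by
  have hπ := Real.pi_pos
  have hn0 : (0:ℝ) < n := by exact_mod_cast hn
  set m := sampleMean n x with hm
  set a : Fin n → ℝ := fun t => x t - m with ha
  have habs : ∀ t : Fin n, ‖(((x t - m : ℝ)) : ℂ) *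
      Complex.exp (-(Complex.I * ((t.1 + 1 : ℕ) : ℂ) * (w : ℂ)))‖ = |a t| := by
    intro t
    rw [norm_mul, Complex.norm_exp]
    have hre : (-(Complex.I * ((t.1 + 1 : ℕ) : ℂ) * (w : ℂ))).re = 0 := by
      simp [Complex.mul_re, Complex.mul_im]
    rw [hre, Real.exp_zero, mul_one, Complex.norm_real, Real.norm_eq_abs]
  have hsum : ‖∑ t : Fin n, (((x t - m : ℝ)) : ℂ) *
      Complex.exp (-(Complex.I * ((t.1 + 1 : ℕ) : ℂ) * (w : ℂ)))‖ ≤ ∑ t, |a t| := by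
    calc ‖∑ t : Fin n, (((x t - m : ℝ)) : ℂ) *
          Complex.exp (-(Complex.I * ((t.1 + 1 : ℕ) : ℂ) * (w : ℂ)))‖
        ≤ ∑ t : Fin n, ‖(((x t - m : ℝ)) : ℂ) *
          Complex.exp (-(Complex.I * ((t.1 + 1 : ℕ) : ℂ) * (w : ℂ)))‖ := by
          exact norm_sum_le Finset.univ
            (fun t : Fin n => (((x t - m : ℝ)) : ℂ) *
              Complex.exp (-(Complex.I * ((t.1 + 1 : ℕ) : ℂ) * (w : ℂ))))
    _ = ∑ t, |a t| := Finset.sum_congr rfl fun t _ => habs t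
  have hCS : (∑ t, |a t|)^2 ≤ (n : ℝ) * ∑ t, (a t)^2 := by
    have := sq_sum_le_card_mul_sum_sq (s := Finset.univ) (f := fun t : Fin n => |a t|)
    simpa [sq_abs, Finset.card_univ] using this
  have hsum2 : ∑ t, (a t)^2 ≤ ∑ t, (x t)^2 := by
    have hxm : ∑ t, x t = n * m := by
      rw [hm, sampleMean]
      field_simp
    have hexp : ∑ t, (a t)^2 = (∑ t, (x t)^2) - n * m^2 := by
      have hpt : ∀ t : Fin n, (a t)^2 = (x t)^2 - (2*m)*(x t) + m^2 := fun t => by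
        simp only [ha]; ring
      rw [Finset.sum_congr rfl fun t _ => hpt t, Finset.sum_add_distrib,
        Finset.sum_sub_distrib, ← Finset.mul_sum, hxm, Finset.sum_const, Finset.card_univ,
        Fintype.card_fin, nsmul_eq_mul]
      ring
    nlinarith [hexp, sq_nonneg m]
  unfold periodogram
  rw [← hm]
  have hb : ‖∑ t : Fin n, (((x t - m : ℝ)) : ℂ) *
      Complex.exp (-(Complex.I * ((t.1 + 1 : ℕ) : ℂ) * (w : ℂ)))‖ ^ 2 ≤ (n : ℝ) * ∑ t, (x t)^2 := by
    calc _ ≤ (∑ t, |a t|)^2 := by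
            apply pow_le_pow_left₀ (norm_nonneg _) hsum
    _ ≤ (n : ℝ) * ∑ t, (a t)^2 := hCS
    _ ≤ (n : ℝ) * ∑ t, (x t)^2 := by
        exact mul_le_mul_of_nonneg_left hsum2 (le_of_lt hn0)
  have hc : (0:ℝ) < 2 * π * n := by positivity
  calc (1 / (2 * π * n)) * _ ≤ (1 / (2 * π * n)) * ((n:ℝ) * ∑ t, (x t)^2) := by
        apply mul_le_mul_of_nonneg_left hb (by positivity)
  _ = (1/(2*π)) * ∑ t, (x t)^2 := by field_simp
  _ ≤ 1 * ∑ t, (x t)^2 := by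
      apply mul_le_mul_of_nonneg_right _ (Finset.sum_nonneg fun t _ => sq_nonneg _)
      rw [div_le_one (by positivity)]
      nlinarith [Real.pi_gt_three]
  _ = _ := one_mul _



set_option maxHeartbeats 1000000 in
/-- **Fourth-moment bound for the projection estimator.**
There is a numerical constant `C > 0` such that, for the privatized data
`Z_i = ((X_i ∧ τ_n) ∨ (−τ_n)) + ξ_i` of a stationary time series with absolutely summable
autocovariance `γ`, the projection estimator `f̂_m` on a model of dimension `D_m` and the
projection `f_m` of the spectral density satisfy
`E‖f̂_m − f_m‖⁴ ≤ C D_m² [(∑|γ_k| + 8τ_n²/α²)⁴ + n⁴τ_n⁸/(1 ∧ α⁸)]`. -/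
theorem projection_estimator_fourth_moment :
    ∃ C : ℝ, 0 < C ∧
      ∀ (Ω : Type) [MeasurableSpace Ω] (P : Measure Ω), IsProbabilityMeasure P →
      ∀ (X : ℤ → Ω → ℝ), (∀ i, Measurable (X i)) →
      ∀ (μ : ℝ), (∀ i, ∫ x, X i x ∂P = μ) →
      ∀ (γ : ℤ → ℝ), (Summable fun k : ℤ => |γ k|) →
        (∀ i j : ℤ, ∫ x, (X i x - μ) * (X j x - μ) ∂P = γ (i - j)) →
      ∀ (f : ℝ → ℝ), (∀ ω : ℝ, f ω = (1 / (2 * π)) * ∑' k : ℤ, γ k * Real.cos (k * ω)) →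
      ∀ (n : ℕ), 1 ≤ n →
      ∀ (τ α : ℝ), 0 < τ → 0 < α →
      ∀ (ξ : Fin n → Ω → ℝ), (∀ i, Measurable (ξ i)) →
        iIndepFun ξ P →
        (∀ i, IsLaplace P (ξ i) (2 * τ / α)) →
        IndepFun (fun x (i : ℤ) => X i x) (fun x (i : Fin n) => ξ i x) P →
      ∀ (Z : Fin n → Ω → ℝ),
        (∀ i x, Z i x = max (min (X (i.1 + 1) x) τ) (-τ) + ξ i x) →
      ∀ (D : ℕ), 1 ≤ D →
      ∀ (φ : Fin D → ℝ → ℝ), (∀ i, Measurable (φ i)) →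
        (∀ i (ω : ℝ), φ i (-ω) = φ i ω) →
        (∀ i j, (∫ ω in Set.Icc (-π) π, φ i ω * φ j ω) = if i = j then 1 else 0) →
        ∫ x, (∫ s in Set.Icc (-π) π,
            ((∑ i, (∫ w in Set.Icc (-π) π,
                  (periodogram n (fun t => Z t x) w - 8 * τ ^ 2 / α ^ 2) * φ i w) * φ i s)
              - ∑ i, (∫ w in Set.Icc (-π) π, f w * φ i w) * φ i s) ^ 2) ^ 2 ∂P
          ≤ C * D ^ 2 * (((∑' k : ℤ, |γ k|) + 8 * τ ^ 2 / α ^ 2) ^ 4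
              + n ^ 4 * τ ^ 8 / min 1 (α ^ 8)) := by
  have hπ := Real.pi_pos
  refine ⟨4*π^2*35672558976, by positivity, ?_⟩
  intro Ω _ P hP X hX μ hμ γ hγ hcov f hf n hn τ α hτ hα ξ hξ hξind hLap hXξind Z hZ D hD
    φ hφm hφeven hφon
  set q : ℝ := 8 * τ ^ 2 / α ^ 2 with hqdef
  have hq0 : 0 ≤ q := by positivity
  set G : ℝ := ∑' k : ℤ, |γ k| with hGdef
  have hG0 : 0 ≤ G := tsum_nonneg fun k => abs_nonneg _
  have hn0 : (0:ℝ) < n := by exact_mod_cast hn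
  -- finite measure on Icc
  have hIccvol : volume (Set.Icc (-π) π) < ⊤ := by
    rw [Real.volume_Icc]; exact ENNReal.ofReal_lt_top
  haveI : Fact (volume (Set.Icc (-π) π) < ⊤) := ⟨hIccvol⟩
  have hvolR : ((volume.restrict (Set.Icc (-π) π)) Set.univ).toReal = 2*π := by
    rw [Measure.restrict_apply_univ, Real.volume_Icc]
    rw [show π - -π = 2*π by ring]
    exact ENNReal.toReal_ofReal (by positivity)
  -- f is continuous and bounded by G
  have hsummand : ∀ w : ℝ, ∀ k : ℤ, ‖γ k * Real.cos (k * w)‖ ≤ |γ k| := by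
    intro w k
    rw [Real.norm_eq_abs, abs_mul]
    calc |γ k| * |Real.cos (k*w)| ≤ |γ k| * 1 :=
          mul_le_mul_of_nonneg_left (Real.abs_cos_le_one _) (abs_nonneg _)
    _ = |γ k| := mul_one _
  have hfc : Continuous f := by
    have : f = fun w => (1 / (2 * π)) * ∑' k : ℤ, γ k * Real.cos (k * w) := funext hf
    rw [this]
    apply Continuous.mul continuous_const
    apply continuous_tsum (fun k : ℤ => continuous_const.mul
      (Real.continuous_cos.comp (continuous_const.mul continuous_id))) hγ
    intro k w
    exact hsummand w k
  have hfb : ∀ w, |f w| ≤ G := by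
    intro w
    rw [hf w]
    have hsum : Summable fun k : ℤ => γ k * Real.cos (k * w) := by
      apply Summable.of_norm
      exact hγ.of_nonneg_of_le (fun k => norm_nonneg _) (hsummand w)
    calc |(1 / (2 * π)) * ∑' k : ℤ, γ k * Real.cos (k * w)|
        = (1 / (2 * π)) * |∑' k : ℤ, γ k * Real.cos (k * w)| := by
          rw [abs_mul, abs_of_nonneg (by positivity : (0:ℝ) ≤ 1/(2*π))]
    _ ≤ 1 * |∑' k : ℤ, γ k * Real.cos (k * w)| := by
          apply mul_le_mul_of_nonneg_right _ (abs_nonneg _)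
          rw [div_le_one (by positivity)]
          nlinarith [Real.pi_gt_three]
    _ = |∑' k : ℤ, γ k * Real.cos (k * w)| := one_mul _
    _ ≤ ∑' k : ℤ, |γ k| := by
          have := norm_tsum_le_tsum_norm (f := fun k : ℤ => γ k * Real.cos (k * w))
            (hγ.of_nonneg_of_le (fun k => norm_nonneg _) (hsummand w))
          refine le_trans ?_ (le_trans this ?_)
          · rw [Real.norm_eq_abs]
          · exact Summable.tsum_le_tsum (hsummand w)
              (hγ.of_nonneg_of_le (fun k => norm_nonneg _) (hsummand w)) hγ
  -- φ integrability facts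
  have hφ2 : ∀ i, Integrable (fun w => φ i w * φ i w)
      (volume.restrict (Set.Icc (-π) π)) := by
    intro i
    by_contra hni
    have h0 := integral_undef hni
    rw [hφon i i] at h0
    simp at h0
  have hφ1 : ∀ i, Integrable (fun w => |φ i w|) (volume.restrict (Set.Icc (-π) π)) := by
    intro i
    have hdom : Integrable (fun w => (1 + φ i w * φ i w)/2)
        (volume.restrict (Set.Icc (-π) π)) := ((integrable_const 1).add (hφ2 i)).div_const 2
    apply hdom.mono' ((hφm i).abs.aestronglyMeasurable)
    apply ae_of_all
    intro w
    rw [Real.norm_eq_abs, abs_abs]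
    nlinarith [sq_nonneg (|φ i w| - 1), abs_mul_abs_self (φ i w), abs_nonneg (φ i w)]
  have hφij : ∀ i j, Integrable (fun w => φ i w * φ j w)
      (volume.restrict (Set.Icc (-π) π)) := by
    intro i j
    have hdom : Integrable (fun w => (φ i w * φ i w + φ j w * φ j w)/2)
        (volume.restrict (Set.Icc (-π) π)) := ((hφ2 i).add (hφ2 j)).div_const 2
    apply hdom.mono' (((hφm i).mul (hφm j)).aestronglyMeasurable)
    apply ae_of_all
    intro w
    simp only [Real.norm_eq_abs, Pi.mul_apply]; rw [abs_mul]
    nlinarith [sq_nonneg (|φ i w| - |φ j w|), abs_mul_abs_self (φ i w),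
      abs_mul_abs_self (φ j w)]
  have hφcs : ∀ i, (∫ w in Set.Icc (-π) π, |φ i w|)^2 ≤ 2*π := by
    intro i
    have h := aux_cs (hφ1 i) (hφ2 i)
    rw [hvolR, hφon i i] at h
    simpa using h
  -- Z is measurable
  have hZm : ∀ t : Fin n, Measurable (Z t) := by
    intro t
    have hzt : Z t = fun x => max (min (X (t.1+1) x) τ) (-τ) + ξ t x := funext (hZ t)
    rw [hzt]
    exact (((hX _).min measurable_const).max measurable_const).add (hξ t)
  -- pointwise quantities
  set S : Ω → ℝ := fun x => ∑ t, (Z t x)^2 with hSdef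
  have hS0 : ∀ x, 0 ≤ S x := fun x => Finset.sum_nonneg fun t _ => sq_nonneg _
  set M : Ω → ℝ := fun x => S x + G + q with hMdef
  have hM0 : ∀ x, 0 ≤ M x := fun x => by
    have := hS0 x; simp only [hMdef]; linarith
  -- key pointwise bound on the inner integral
  have key : ∀ x : Ω,
      (∫ s in Set.Icc (-π) π,
          ((∑ i, (∫ w in Set.Icc (-π) π,
                (periodogram n (fun t => Z t x) w - q) * φ i w) * φ i s)
            - ∑ i, (∫ w in Set.Icc (-π) π, f w * φ i w) * φ i s) ^ 2) ^ 2
        ≤ 4*π^2*(D:ℝ)^2*(M x)^4 := by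
    intro x
    set I : ℝ → ℝ := fun w => periodogram n (fun t => Z t x) w with hIdef
    have hIc : Continuous I := periodogram_continuous n _
    have hI0 : ∀ w, 0 ≤ I w := fun w => periodogram_nonneg n _ w
    have hIle : ∀ w, I w ≤ S x := fun w => periodogram_le n hn _ w
    have hIb : ∀ w, |I w - q - f w| ≤ M x := by
      intro w
      have h3 := abs_le.mp (hfb w)
      rw [abs_le]
      constructor
      · simp only [hMdef]; nlinarith [hI0 w, h3.2, hS0 x]
      · simp only [hMdef]; nlinarith [hIle w, h3.1, hq0]
    -- integrability in w
    have hint1 : ∀ i, Integrable (fun w => (I w - q) * φ i w)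
        (volume.restrict (Set.Icc (-π) π)) := by
      intro i
      apply ((hφ1 i).const_mul (S x + q)).mono'
        (((hIc.measurable.sub measurable_const).mul (hφm i)).aestronglyMeasurable)
      apply ae_of_all
      intro w
      simp only [Real.norm_eq_abs, Pi.mul_apply, Pi.sub_apply, ← hqdef]; rw [abs_mul]
      apply mul_le_mul_of_nonneg_right _ (abs_nonneg _)
      rw [abs_le]
      constructor
      · nlinarith [hI0 w, hq0, hS0 x]
      · nlinarith [hIle w, hq0]
    have hint2 : ∀ i, Integrable (fun w => f w * φ i w)
        (volume.restrict (Set.Icc (-π) π)) := by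
      intro i
      apply ((hφ1 i).const_mul G).mono'
        ((hfc.measurable.mul (hφm i)).aestronglyMeasurable)
      apply ae_of_all
      intro w
      simp only [Real.norm_eq_abs, Pi.mul_apply]; rw [abs_mul]
      exact mul_le_mul_of_nonneg_right (hfb w) (abs_nonneg _)
    have hint3 : ∀ i, Integrable (fun w => (I w - q - f w) * φ i w)
        (volume.restrict (Set.Icc (-π) π)) := by
      intro i
      apply ((hφ1 i).const_mul (M x)).mono'
        ((((hIc.measurable.sub measurable_const).sub hfc.measurable).mul
          (hφm i)).aestronglyMeasurable)
      apply ae_of_all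
      intro w
      simp only [Real.norm_eq_abs, Pi.mul_apply, Pi.sub_apply, ← hqdef]; rw [abs_mul]
      exact mul_le_mul_of_nonneg_right (hIb w) (abs_nonneg _)
    set c : Fin D → ℝ := fun i => ∫ w in Set.Icc (-π) π, (I w - q) * φ i w with hcdef
    set d : Fin D → ℝ := fun i => ∫ w in Set.Icc (-π) π, f w * φ i w with hddef
    have he : ∀ i, c i - d i = ∫ w in Set.Icc (-π) π, (I w - q - f w) * φ i w := by
      intro i
      rw [hcdef, hddef]
      simp only
      rw [← integral_sub (hint1 i) (hint2 i)]
      congr 1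
      funext w
      ring
    have heb : ∀ i, (c i - d i)^2 ≤ 2*π*(M x)^2 := by
      intro i
      have h1 : |c i - d i| ≤ M x * ∫ w in Set.Icc (-π) π, |φ i w| := by
        rw [he i]
        calc |∫ w in Set.Icc (-π) π, (I w - q - f w) * φ i w|
            ≤ ∫ w in Set.Icc (-π) π, |I w - q - f w| * |φ i w| := by
              simpa [Real.norm_eq_abs, abs_mul] using norm_integral_le_integral_norm
                (μ := volume.restrict (Set.Icc (-π) π))
                (fun w => (I w - q - f w) * φ i w)
        _ ≤ ∫ w in Set.Icc (-π) π, M x * |φ i w| := by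
            apply integral_mono_of_nonneg
              (ae_of_all _ fun w => mul_nonneg (abs_nonneg _) (abs_nonneg _))
              ((hφ1 i).const_mul (M x))
            apply ae_of_all
            intro w
            exact mul_le_mul_of_nonneg_right (hIb w) (abs_nonneg _)
        _ = M x * ∫ w in Set.Icc (-π) π, |φ i w| := integral_const_mul _ _
      have h2 : 0 ≤ ∫ w in Set.Icc (-π) π, |φ i w| :=
        integral_nonneg fun w => abs_nonneg _
      calc (c i - d i)^2 = |c i - d i|^2 := (sq_abs _).symm
      _ ≤ (M x * ∫ w in Set.Icc (-π) π, |φ i w|)^2 :=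
          pow_le_pow_left₀ (abs_nonneg _) h1 2
      _ = (M x)^2 * (∫ w in Set.Icc (-π) π, |φ i w|)^2 := by ring
      _ ≤ (M x)^2 * (2*π) := mul_le_mul_of_nonneg_left (hφcs i) (sq_nonneg _)
      _ = 2*π*(M x)^2 := by ring
    have hinner : (∫ s in Set.Icc (-π) π,
        ((∑ i, c i * φ i s) - ∑ i, d i * φ i s)^2) = ∑ i, (c i - d i)^2 := by
      have hptw : ∀ s, ((∑ i, c i * φ i s) - ∑ i, d i * φ i s)^2
          = ∑ i, ∑ j, ((c i - d i)*(c j - d j)) * (φ i s * φ j s) := by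
        intro s
        rw [← Finset.sum_sub_distrib]
        have h1 : (∑ i, (c i * φ i s - d i * φ i s)) = ∑ i, (c i - d i) * φ i s :=
          Finset.sum_congr rfl fun i _ => by ring
        rw [h1, sq, Finset.sum_mul_sum]
        apply Finset.sum_congr rfl
        intro i _
        apply Finset.sum_congr rfl
        intro j _
        ring
      simp only [hptw]
      rw [integral_finset_sum _ (fun i _ => integrable_finset_sum _
        (fun j _ => ((hφij i j).const_mul _)))]
      apply Finset.sum_congr rfl
      intro i _
      rw [integral_finset_sum _ (fun j _ => ((hφij i j).const_mul _))]
      have h2 : ∀ j, ∫ s in Set.Icc (-π) π, ((c i - d i)*(c j - d j)) * (φ i s * φ j s)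
          = ((c i - d i)*(c j - d j)) * ∫ s in Set.Icc (-π) π, φ i s * φ j s :=
        fun j => integral_const_mul _ _
      rw [Finset.sum_congr rfl fun j _ => h2 j]
      rw [Finset.sum_congr rfl fun j _ => by rw [hφon i j]]
      simp only [mul_ite, mul_one, mul_zero]
      rw [Finset.sum_ite_eq]
      simp [sq]
    have hsum_le : ∑ i, (c i - d i)^2 ≤ (D:ℝ) * (2*π*(M x)^2) := by
      calc ∑ i, (c i - d i)^2 ≤ ∑ _i : Fin D, 2*π*(M x)^2 :=
            Finset.sum_le_sum fun i _ => heb i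
      _ = (D:ℝ) * (2*π*(M x)^2) := by
          rw [Finset.sum_const, Finset.card_univ, Fintype.card_fin, nsmul_eq_mul]
    have hnn : 0 ≤ ∑ i, (c i - d i)^2 := Finset.sum_nonneg fun i _ => sq_nonneg _
    rw [hinner]
    calc (∑ i, (c i - d i)^2)^2 ≤ ((D:ℝ) * (2*π*(M x)^2))^2 :=
          pow_le_pow_left₀ hnn hsum_le 2
    _ = 4*π^2*(D:ℝ)^2*(M x)^4 := by ring
  -- moments of the Laplace noise
  have hb : (0:ℝ) < 2*τ/α := by positivity
  have hξ8int : ∀ t : Fin n, Integrable (fun x => (ξ t x)^8) P :=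
    fun t => (laplace_moment8 (hξ t) hb (hLap t)).1
  have hξ8val : ∀ t : Fin n, ∫ x, (ξ t x)^8 ∂P = 40320 * (2*τ/α)^8 :=
    fun t => (laplace_moment8 (hξ t) hb (hLap t)).2
  -- pointwise eighth moment bound
  have hZ8 : ∀ (x : Ω) (t : Fin n), (Z t x)^8 ≤ 128*(τ^8 + (ξ t x)^8) := by
    intro x t
    rw [hZ t x]
    have hcl : |max (min (X (t.1+1) x) τ) (-τ)| ≤ τ := by
      rw [abs_le]
      constructor
      · exact le_max_right _ _
      · exact max_le (min_le_right _ _) (by linarith)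
    have hcl8 : (max (min (X (t.1+1) x) τ) (-τ))^8 ≤ τ^8 := by
      calc (max (min (X (t.1+1) x) τ) (-τ))^8
          = |max (min (X (t.1+1) x) τ) (-τ)|^8 := by
            rw [pow_abs, abs_of_nonneg (by positivity : (0:ℝ) ≤ (max (min (X (t.1+1) x) τ) (-τ))^8)]
      _ ≤ τ^8 := pow_le_pow_left₀ (abs_nonneg _) hcl 8
    calc (max (min (X (t.1+1) x) τ) (-τ) + ξ t x)^8
        ≤ 128*((max (min (X (t.1+1) x) τ) (-τ))^8 + (ξ t x)^8) := aux_pow8_add _ _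
    _ ≤ 128*(τ^8 + (ξ t x)^8) := by nlinarith [hcl8]
  have hS4 : ∀ x, (S x)^4 ≤ (n:ℝ)^3 * ∑ t, (Z t x)^8 := by
    intro x
    have h1 : (S x)^2 ≤ (n:ℝ) * ∑ t, (Z t x)^4 := by
      have := sq_sum_le_card_mul_sum_sq (s := Finset.univ) (f := fun t : Fin n => (Z t x)^2)
      simpa [Finset.card_univ, hSdef, ← pow_mul] using this
    have h2 : (∑ t, (Z t x)^4)^2 ≤ (n:ℝ) * ∑ t, (Z t x)^8 := by
      have := sq_sum_le_card_mul_sum_sq (s := Finset.univ) (f := fun t : Fin n => (Z t x)^4)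
      simpa [Finset.card_univ, ← pow_mul] using this
    calc (S x)^4 = ((S x)^2)^2 := by ring
    _ ≤ ((n:ℝ) * ∑ t, (Z t x)^4)^2 := pow_le_pow_left₀ (sq_nonneg _) h1 2
    _ = (n:ℝ)^2 * (∑ t, (Z t x)^4)^2 := by ring
    _ ≤ (n:ℝ)^2 * ((n:ℝ) * ∑ t, (Z t x)^8) :=
        mul_le_mul_of_nonneg_left h2 (by positivity)
    _ = (n:ℝ)^3 * ∑ t, (Z t x)^8 := by ring
  have hchain : ∀ x, 4*π^2*(D:ℝ)^2*(M x)^4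
      ≤ 4*π^2*(D:ℝ)^2*(27*(G^4+q^4) + 3456*(n:ℝ)^3*((n:ℝ)*τ^8 + ∑ t, (ξ t x)^8)) := by
    intro x
    apply mul_le_mul_of_nonneg_left _ (by positivity : (0:ℝ) ≤ 4*π^2*(D:ℝ)^2)
    have hs8 : ∑ t, (Z t x)^8 ≤ 128*((n:ℝ)*τ^8 + ∑ t, (ξ t x)^8) := by
      calc ∑ t, (Z t x)^8 ≤ ∑ t, 128*(τ^8 + (ξ t x)^8) :=
            Finset.sum_le_sum fun t _ => hZ8 x t
      _ = 128*((n:ℝ)*τ^8 + ∑ t, (ξ t x)^8) := by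
          rw [← Finset.mul_sum, Finset.sum_add_distrib, Finset.sum_const, Finset.card_univ,
            Fintype.card_fin, nsmul_eq_mul]
    have h4 : (M x)^4 ≤ 27*((S x)^4 + G^4 + q^4) := by
      simp only [hMdef]
      exact aux_add3_pow4 (S x) G q (hS0 x) hG0 hq0
    have h5 := hS4 x
    have hn3 : (0:ℝ) ≤ (n:ℝ)^3 := by positivity
    nlinarith [mul_le_mul_of_nonneg_left hs8 hn3]
  -- integrability of the dominating function
  have hg : Integrable (fun x => ∑ t, (ξ t x)^8) P :=
    integrable_finset_sum _ fun t _ => hξ8int t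
  have hHint : Integrable (fun x =>
      4*π^2*(D:ℝ)^2*(27*(G^4+q^4) + 3456*(n:ℝ)^3*((n:ℝ)*τ^8 + ∑ t, (ξ t x)^8))) P := by
    exact (((integrable_const _).add (((integrable_const _).add hg).const_mul
      (3456*(n:ℝ)^3))).const_mul (4*π^2*(D:ℝ)^2))
  refine le_trans (integral_mono_of_nonneg (ae_of_all _ fun x => sq_nonneg _) hHint
    (ae_of_all _ fun x => le_trans (key x) (hchain x))) ?_
  -- compute the integral of the dominating function
  have h1 : ∫ x, ∑ t, (ξ t x)^8 ∂P = (n:ℝ) * (40320*(2*τ/α)^8) := by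
    rw [integral_finset_sum _ (fun t _ => hξ8int t),
      Finset.sum_congr rfl fun t _ => hξ8val t, Finset.sum_const, Finset.card_univ,
      Fintype.card_fin, nsmul_eq_mul]
  have hval : ∫ x, 4*π^2*(D:ℝ)^2*(27*(G^4+q^4) + 3456*(n:ℝ)^3*((n:ℝ)*τ^8 + ∑ t, (ξ t x)^8)) ∂P
      = 4*π^2*(D:ℝ)^2*(27*(G^4+q^4) + 3456*(n:ℝ)^3*((n:ℝ)*τ^8 + (n:ℝ)*(40320*(2*τ/α)^8))) := by
    have hg2 : Integrable (fun x => (n:ℝ)*τ^8 + ∑ t, (ξ t x)^8) P := (integrable_const _).add hg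
    have hg3 : Integrable (fun x => 3456*(n:ℝ)^3*((n:ℝ)*τ^8 + ∑ t, (ξ t x)^8)) P :=
      hg2.const_mul _
    rw [integral_const_mul, integral_add (integrable_const _) hg3, integral_const,
      integral_const_mul (3456*(n:ℝ)^3), integral_add (integrable_const _) hg, h1,
      integral_const]
    simp [measure_univ]
  rw [hval]
  -- final numerical bookkeeping
  have hb8 : (2*τ/α)^8 = 256*(τ^8/α^8) := by
    rw [div_pow, mul_pow]
    norm_num
    ring
  have hminpos : 0 < min 1 (α^8) := lt_min one_pos (by positivity)
  have ht2a : (n:ℝ)^4*τ^8 ≤ (n:ℝ)^4*τ^8/min 1 (α^8) := by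
    rw [le_div_iff₀ hminpos]
    nlinarith [min_le_left 1 (α^8), mul_nonneg (by positivity : (0:ℝ) ≤ (n:ℝ)^4)
      (by positivity : (0:ℝ) ≤ τ^8)]
  have ht2b : (n:ℝ)^4*(τ^8/α^8) ≤ (n:ℝ)^4*τ^8/min 1 (α^8) := by
    have e0 : (n:ℝ)^4*(τ^8/α^8) = (n:ℝ)^4*τ^8/α^8 := by ring
    rw [e0, div_le_div_iff₀ (by positivity) hminpos]
    nlinarith [min_le_right 1 (α^8), mul_nonneg (by positivity : (0:ℝ) ≤ (n:ℝ)^4)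
      (by positivity : (0:ℝ) ≤ τ^8)]
  have hG4 : G^4 + q^4 ≤ 2*(G+q)^4 := by
    have a1 : G^4 ≤ (G+q)^4 := pow_le_pow_left₀ hG0 (by linarith) 4
    have a2 : q^4 ≤ (G+q)^4 := pow_le_pow_left₀ hq0 (by linarith) 4
    linarith
  have hGq4nn : (0:ℝ) ≤ (G+q)^4 := by positivity
  calc 4*π^2*(D:ℝ)^2*(27*(G^4+q^4) + 3456*(n:ℝ)^3*((n:ℝ)*τ^8 + (n:ℝ)*(40320*(2*τ/α)^8)))
      ≤ 4*π^2*(D:ℝ)^2*(35672558976*((G+q)^4 + (n:ℝ)^4*τ^8/min 1 (α^8))) := by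
        apply mul_le_mul_of_nonneg_left _ (by positivity : (0:ℝ) ≤ 4*π^2*(D:ℝ)^2)
        rw [hb8]
        nlinarith [ht2a, ht2b, hG4, hGq4nn]
  _ = 4*π^2*35672558976 * (D:ℝ)^2 * ((G+q)^4 + (n:ℝ)^4*τ^8/min 1 (α^8)) := by ring
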